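/- Under the CBO setup, for every s = 1,…,d and every k ∈ ℕ, E[diam(y_k^s)] ≤ θ^k · E[diam(y_0^s)]. -/

import Mathlib

open MeasureTheory ProbabilityTheory
open scoped RealInnerProductSpace

noncomputable section

/-- The diameter of a vector `y ∈ ℝ^N`: `max_i y_i - min_i y_i`. -/
def vdiam {N : ℕ} (y : Fin N → ℝ) : ℝ := (⨆ i, y i) - (⨅ i, y i)

/-- Data of the discrete consensus-based optimization (CBO) method with noisy objective
function: drift parameter `γ`, noise level `ξ`, weight parameter `α`, particle positions
`x k i : Ω → ℝ^d`, diffusion noises `η k s i : Ω → ℝ`, and the values `fhat k i : Ω → ℝ`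
returned by the stochastic oracle (i.e. `f̂(x_k^i, ω_k^i)`). -/
structure CBOData (N d : ℕ) (Ω : Type) [MeasurableSpace Ω] where
  γ : ℝ
  ξ : ℝ
  α : ℝ
  x : ℕ → Fin N → Ω → EuclideanSpace ℝ (Fin d)
  η : ℕ → Fin d → Fin N → Ω → ℝ
  fhat : ℕ → Fin N → Ω → ℝ

namespace CBOData

variable {N d : ℕ} {Ω : Type} [MeasurableSpace Ω]

/-- The noisy consensus point
`x̂_k^α = (Σ_i x_k^i e^{-α f̂(x_k^i, ω_k^i)}) / (Σ_i e^{-α f̂(x_k^i, ω_k^i)})`. -/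
def xhat (C : CBOData N d Ω) (k : ℕ) (ω : Ω) : EuclideanSpace ℝ (Fin d) :=
  (∑ i, Real.exp (-C.α * C.fhat k i ω))⁻¹ •
    ∑ i, Real.exp (-C.α * C.fhat k i ω) • C.x k i ω

/-- The vector of `s`-th components of the particles: `y_k^s = (x_{k,s}^1, …, x_{k,s}^N)`. -/
def y (C : CBOData N d Ω) (k : ℕ) (s : Fin d) (ω : Ω) : Fin N → ℝ :=
  fun i => C.x k i ω s

/-- The contraction constant `θ = 1 - γ + 8 ξ (log(√2 N))^{1/2}`. -/
def th (C : CBOData N d Ω) : ℝ :=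
  1 - C.γ + 8 * C.ξ * Real.sqrt (Real.log (Real.sqrt 2 * N))

/-- The σ-algebra generated by the noises of iteration `k`. -/
def noiseσ (C : CBOData N d Ω) (k : ℕ) : MeasurableSpace Ω :=
  ⨆ s : Fin d, ⨆ i : Fin N, MeasurableSpace.comap (C.η k s i) inferInstance

/-- The σ-algebra generated by the particle positions and the oracle evaluations up to
iteration `k`, together with the noises of iterations `< k`. -/
def histσ (C : CBOData N d Ω) (k : ℕ) : MeasurableSpace Ω :=
  ((⨆ (l : ℕ) (_ : l ≤ k), ⨆ i : Fin N,
      (MeasurableSpace.comap (C.x l i) inferInstance ⊔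
        MeasurableSpace.comap (C.fhat l i) inferInstance)) ⊔
    ⨆ (l : ℕ) (_ : l < k), ⨆ s : Fin d, ⨆ i : Fin N,
      MeasurableSpace.comap (C.η l s i) inferInstance)

/-- `σ_k`: the σ-algebra generated by `{x_l^i : l ≤ k}` and `{η_{l,s}^i : l ≤ k}`. -/
def sigmak (C : CBOData N d Ω) (k : ℕ) : MeasurableSpace Ω :=
  ((⨆ (l : ℕ) (_ : l ≤ k), ⨆ i : Fin N,
      MeasurableSpace.comap (C.x l i) inferInstance) ⊔
    ⨆ (l : ℕ) (_ : l ≤ k), ⨆ s : Fin d, ⨆ i : Fin N,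
      MeasurableSpace.comap (C.η l s i) inferInstance)

/-- The hypotheses of the CBO setup: `N, d ≥ 1`, `γ ∈ (0,1)`, `ξ > 0`, `α > 0`,
measurability of all the random variables, the noises are i.i.d. centered Gaussian with
variance `ξ²` and, at each iteration `k`, the family of iteration-`k` noises is independent
of the particle positions and oracle evaluations up to iteration `k`; finally the particles
evolve according to the (componentwise) CBO update rule. -/
structure Hyp (C : CBOData N d Ω) (P : Measure Ω) : Prop where
  hN : 1 ≤ N
  hd : 1 ≤ d
  hγ : C.γ ∈ Set.Ioo (0:ℝ) 1
  hξ : 0 < C.ξ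
  hα : 0 < C.α
  meas_x : ∀ k i, Measurable (C.x k i)
  meas_η : ∀ k s i, Measurable (C.η k s i)
  meas_fhat : ∀ k i, Measurable (C.fhat k i)
  η_gauss : ∀ k s i, Measure.map (C.η k s i) P = gaussianReal 0 ⟨C.ξ ^ 2, sq_nonneg C.ξ⟩
  η_iid : iIndepFun
    (fun p : ℕ × Fin d × Fin N => C.η p.1 p.2.1 p.2.2) P
  η_indep_hist : ∀ k, Indep (C.noiseσ k) (C.histσ k) P
  evol : ∀ k i s ω, C.x (k+1) i ω s =
    C.x k i ω s - C.γ * (C.x k i ω s - C.xhat k ω s)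
      - (C.x k i ω s - C.xhat k ω s) * C.η k s i ω

end CBOData

open scoped NNReal ENNReal

section AuxLemmas



lemma aux_pdf_key (v : ℝ≥0) (hv : v ≠ 0) (t x : ℝ) :
    gaussianPDFReal 0 v x * Real.exp (t*x) = Real.exp (v*t^2/2) * gaussianPDFReal (t*v) v x := by
  have hv' : (v:ℝ) ≠ 0 := by exact_mod_cast hv
  simp only [gaussianPDFReal]
  rw [mul_assoc, ← Real.exp_add, mul_left_comm, ← Real.exp_add]
  congr 2
  field_simp
  ring

lemma aux_gauss_exp_integrable (v : ℝ≥0) (t : ℝ) :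
    Integrable (fun x => Real.exp (t*x)) (gaussianReal 0 v) := by
  by_cases hv : v = 0
  · rw [hv, gaussianReal_zero_var]
    refine (integrable_const (Real.exp (t*0))).congr ?_
    rw [Filter.eventuallyEq_comm, MeasureTheory.ae_dirac_eq]
    exact Filter.eventually_pure.2 rfl
  · rw [gaussianReal_of_var_ne_zero _ hv]
    rw [integrable_withDensity_iff (measurable_gaussianPDF _ _)
      (ae_of_all _ fun x => ENNReal.ofReal_lt_top)]
    have : (fun x => Real.exp (t*x) * (gaussianPDF 0 v x).toReal)
        = fun x => Real.exp (v*t^2/2) * gaussianPDFReal (t*v) v x := by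
      ext x
      rw [gaussianPDF, ENNReal.toReal_ofReal (gaussianPDFReal_nonneg _ _ _), mul_comm,
        aux_pdf_key v hv]
    rw [this]
    exact (integrable_gaussianPDFReal _ _).const_mul _

lemma aux_gauss_exp_integral (v : ℝ≥0) (t : ℝ) :
    ∫ x, Real.exp (t*x) ∂(gaussianReal 0 v) = Real.exp (v*t^2/2) := by
  by_cases hv : v = 0
  · rw [hv, gaussianReal_zero_var, integral_dirac]
    simp
  · rw [gaussianReal_of_var_ne_zero _ hv]
    have hpdf : (gaussianPDF 0 v) = fun x => ((Real.toNNReal (gaussianPDFReal 0 v x) : ℝ≥0) : ℝ≥0∞) := by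
      ext x; rw [gaussianPDF, ENNReal.ofReal]
    rw [hpdf, integral_withDensity_eq_integral_smul
      ((measurable_gaussianPDFReal 0 v).real_toNNReal)]
    have : (fun x => (Real.toNNReal (gaussianPDFReal 0 v x)) • Real.exp (t*x))
        = fun x => Real.exp (v*t^2/2) * gaussianPDFReal (t*v) v x := by
      ext x
      rw [NNReal.smul_def, smul_eq_mul, Real.coe_toNNReal _ (gaussianPDFReal_nonneg _ _ _),
        aux_pdf_key v hv]
    rw [this, integral_const_mul, integral_gaussianPDFReal_eq_one _ hv, mul_one]

lemma aux_exp_eta {Ω : Type} [MeasurableSpace Ω] (P : Measure Ω) {ξ : ℝ}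
    (η : Ω → ℝ) (hm : Measurable η)
    (hmap : Measure.map η P = gaussianReal 0 ⟨ξ^2, sq_nonneg ξ⟩) (t : ℝ) :
    Integrable (fun ω => Real.exp (t * η ω)) P ∧
      ∫ ω, Real.exp (t * η ω) ∂P = Real.exp (ξ^2 * t^2 / 2) := by
  have hg : Measurable fun x : ℝ => Real.exp (t*x) := by fun_prop
  constructor
  · have h2 : Integrable (fun x : ℝ => Real.exp (t*x)) (Measure.map η P) := by
      rw [hmap]; exact aux_gauss_exp_integrable _ t
    exact (integrable_map_measure hg.aestronglyMeasurable hm.aemeasurable).1 h2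
  · rw [← integral_map hm.aemeasurable hg.aestronglyMeasurable, hmap]
    exact aux_gauss_exp_integral _ t

lemma aux_euclid_apply {d N : ℕ} (c : ℝ) (f : Fin N → ℝ) (v : Fin N → EuclideanSpace ℝ (Fin d)) (s : Fin d) :
    (c • ∑ i, f i • v i) s = c * ∑ i, f i * v i s := by
  rw [PiLp.smul_apply, smul_eq_mul]
  congr 1
  induction (Finset.univ : Finset (Fin N)) using Finset.cons_induction with
  | empty => simp
  | cons a s ha ih => rw [Finset.sum_cons, Finset.sum_cons, ← ih]; rfl

lemma aux_meas_sup {Ω : Type} {m : MeasurableSpace Ω} {N : ℕ} [Nonempty (Fin N)]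
    {f : Fin N → Ω → ℝ} (hf : ∀ i, Measurable[m] (f i)) :
    Measurable[m] fun ω => ⨆ i, f i ω := by
  have h : (fun ω => ⨆ i, f i ω) = Finset.univ.sup' Finset.univ_nonempty f := by
    ext ω
    rw [Finset.sup'_apply, Finset.sup'_univ_eq_ciSup]
  rw [h]
  exact Finset.measurable_sup' _ fun i _ => hf i

lemma aux_meas_inf {Ω : Type} {m : MeasurableSpace Ω} {N : ℕ} [Nonempty (Fin N)]
    {f : Fin N → Ω → ℝ} (hf : ∀ i, Measurable[m] (f i)) :
    Measurable[m] fun ω => ⨅ i, f i ω := by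
  have h : (fun ω => ⨅ i, f i ω) = Finset.univ.inf' Finset.univ_nonempty f := by
    ext ω
    rw [Finset.inf'_apply, Finset.inf'_univ_eq_ciInf]
  rw [h]
  exact Finset.inf'_induction _ _ (fun a ha b hb => ha.inf hb) fun i _ => hf i




lemma aux_consensus {N : ℕ} [Nonempty (Fin N)] (w y : Fin N → ℝ) (hw : ∀ i, 0 < w i) :
    (⨅ j, y j) ≤ (∑ i, w i)⁻¹ * ∑ i, w i * y i ∧
      (∑ i, w i)⁻¹ * ∑ i, w i * y i ≤ ⨆ j, y j := by
  have hS : 0 < ∑ i, w i := Finset.sum_pos (fun i _ => hw i) Finset.univ_nonempty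
  have hbA : BddAbove (Set.range y) := (Set.finite_range y).bddAbove
  have hbB : BddBelow (Set.range y) := (Set.finite_range y).bddBelow
  constructor
  · rw [le_inv_mul_iff₀ hS]
    calc (∑ i, w i) * (⨅ j, y j) = ∑ i, w i * (⨅ j, y j) := by rw [Finset.sum_mul]
      _ ≤ ∑ i, w i * y i :=
        Finset.sum_le_sum fun i _ =>
          mul_le_mul_of_nonneg_left (ciInf_le hbB i) (hw i).le
  · rw [inv_mul_le_iff₀ hS]
    calc ∑ i, w i * y i ≤ ∑ i, w i * (⨆ j, y j) :=
        Finset.sum_le_sum fun i _ =>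
          mul_le_mul_of_nonneg_left (le_ciSup hbA i) (hw i).le
      _ = (∑ i, w i) * (⨆ j, y j) := by rw [Finset.sum_mul]

lemma aux_contract {N : ℕ} [Nonempty (Fin N)] (γ c m : ℝ) (hγ : 0 ≤ 1 - γ) (hm : 0 ≤ m)
    (y y' e : Fin N → ℝ)
    (hc1 : (⨅ j, y j) ≤ c) (hc2 : c ≤ ⨆ j, y j)
    (he : ∀ i, |e i| ≤ m)
    (hev : ∀ i, y' i = y i - γ * (y i - c) - (y i - c) * e i) :
    vdiam y' ≤ vdiam y * ((1 - γ) + 2 * m) := by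
  have hbA : BddAbove (Set.range y) := (Set.finite_range y).bddAbove
  have hbB : BddBelow (Set.range y) := (Set.finite_range y).bddBelow
  set D : ℝ := vdiam y with hD
  have hDd : D = (⨆ j, y j) - (⨅ j, y j) := rfl
  have hyle : ∀ i, (⨅ j, y j) ≤ y i ∧ y i ≤ ⨆ j, y j :=
    fun i => ⟨ciInf_le hbB i, le_ciSup hbA i⟩
  have hDnn : 0 ≤ D := by
    have := hyle (Classical.arbitrary _)
    rw [hDd]; linarith [this.1, this.2]
  have habs : ∀ i, |y i - c| ≤ D := by
    intro i
    rw [abs_le, hDd]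
    constructor <;> linarith [(hyle i).1, (hyle i).2]
  have key : ∀ i j, y' i - y' j ≤ D * ((1 - γ) + 2 * m) := by
    intro i j
    have e1 : y' i - y' j = (1 - γ) * (y i - y j) - (y i - c) * e i + (y j - c) * e j := by
      rw [hev i, hev j]; ring
    have h2 : (y i - c) * e i ≥ -(D * m) := by
      have : |(y i - c) * e i| ≤ D * m := by
        rw [abs_mul]
        exact mul_le_mul (habs i) (he i) (abs_nonneg _) hDnn
      linarith [(abs_le.1 this).1]
    have h3 : (y j - c) * e j ≤ D * m := by
      have : |(y j - c) * e j| ≤ D * m := by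
        rw [abs_mul]
        exact mul_le_mul (habs j) (he j) (abs_nonneg _) hDnn
      linarith [(abs_le.1 this).2]
    have h4 : (1 - γ) * (y i - y j) ≤ (1 - γ) * D := by
      apply mul_le_mul_of_nonneg_left _ hγ
      rw [hDd]; linarith [(hyle i).2, (hyle j).1]
    rw [e1]; nlinarith
  rw [vdiam, sub_le_iff_le_add]
  refine ciSup_le fun i => ?_
  have h5 : y' i - D * ((1 - γ) + 2 * m) ≤ ⨅ j, y' j :=
    le_ciInf fun j => by linarith [key i j]
  linarith


lemma aux_maxbound {Ω : Type} [MeasurableSpace Ω] (P : Measure Ω) [IsProbabilityMeasure P]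
    {N : ℕ} (hN : 1 ≤ N) {ξ : ℝ} (hξ : 0 < ξ) (η : Fin N → Ω → ℝ)
    (hmeas : ∀ i, Measurable (η i))
    (hmap : ∀ i, Measure.map (η i) P = gaussianReal 0 ⟨ξ^2, sq_nonneg ξ⟩) :
    Integrable (fun ω => ⨆ i, |η i ω|) P ∧
      ∫ ω, (⨆ i, |η i ω|) ∂P ≤ 4 * ξ * Real.sqrt (Real.log (Real.sqrt 2 * N)) := by
  haveI : Nonempty (Fin N) := Fin.pos_iff_nonempty.mp hN
  set L : ℝ := Real.log (Real.sqrt 2 * N) with hLdef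
  have hN1 : (1:ℝ) ≤ N := by exact_mod_cast hN
  have hlogN : 0 ≤ Real.log N := Real.log_nonneg hN1
  have hL : L = Real.log 2 / 2 + Real.log N := by
    rw [hLdef, Real.log_mul (by positivity) (by positivity), Real.log_sqrt (by norm_num)]
  have hlog2 := Real.log_two_gt_d9
  have hLpos : 0 < L := by rw [hL]; nlinarith
  set u : ℝ := Real.sqrt L with hu_def
  have hu : 0 < u := Real.sqrt_pos.2 hLpos
  have hu2 : u^2 = L := Real.sq_sqrt hLpos.le
  set t : ℝ := 3 * u / ξ with ht_def
  have ht : 0 < t := by positivity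
  set a : ℝ := t * ξ^2/2 + Real.log (2*N)/t with ha_def
  set g : Ω → ℝ := fun ω => ∑ i, (Real.exp (t * η i ω) + Real.exp (-(t * η i ω))) with hg_def
  have hneg : ∀ i, (fun ω => Real.exp (-(t * η i ω))) = fun ω => Real.exp ((-t) * η i ω) := by
    intro i; ext ω; ring_nf
  have hEint : ∀ i, Integrable (fun ω => Real.exp (t * η i ω)) P :=
    fun i => (aux_exp_eta P (η i) (hmeas i) (hmap i) t).1
  have hEint' : ∀ i, Integrable (fun ω => Real.exp (-(t * η i ω))) P := by
    intro i; rw [hneg i]; exact (aux_exp_eta P (η i) (hmeas i) (hmap i) (-t)).1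
  have hgint : Integrable g P := integrable_finset_sum _ fun i _ => (hEint i).add (hEint' i)
  have hgval : ∫ ω, g ω ∂P = N * (2 * Real.exp (ξ^2*t^2/2)) := by
    have hifs := integral_finset_sum (μ := P) Finset.univ
      (f := fun i ω => Real.exp (t * η i ω) + Real.exp (-(t * η i ω)))
      (fun i _ => (hEint i).add (hEint' i))
    rw [hg_def]
    rw [hifs]
    have hterm : ∀ i ∈ Finset.univ (α := Fin N),
        (∫ ω, (Real.exp (t * η i ω) + Real.exp (-(t * η i ω))) ∂P)
          = 2 * Real.exp (ξ^2*t^2/2) := by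
      intro i _
      rw [integral_add (hEint i) (hEint' i), (aux_exp_eta P (η i) (hmeas i) (hmap i) t).2]
      have : ∫ ω, Real.exp (-(t * η i ω)) ∂P = Real.exp (ξ^2 * (-t)^2 / 2) := by
        rw [hneg i]; exact (aux_exp_eta P (η i) (hmeas i) (hmap i) (-t)).2
      rw [this]; ring_nf
    rw [Finset.sum_congr rfl hterm, Finset.sum_const, Finset.card_univ, Fintype.card_fin,
      nsmul_eq_mul]
  set M : Ω → ℝ := fun ω => ⨆ i, |η i ω| with hM_def
  have hMmeas : Measurable M := aux_meas_sup fun i => (hmeas i).abs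
  have hMnn : ∀ ω, 0 ≤ M ω := fun ω =>
    le_trans (abs_nonneg (η (Classical.arbitrary _) ω))
      (le_ciSup (f := fun i => |η i ω|) ((Set.finite_range _).bddAbove)
        (Classical.arbitrary _))
  have hexpM : ∀ ω, Real.exp (t * M ω) ≤ g ω := by
    intro ω
    obtain ⟨i0, hi0⟩ := Finite.exists_max fun i => |η i ω|
    have hMle : M ω ≤ |η i0 ω| := ciSup_le hi0
    have h1 : Real.exp (t * M ω) ≤ Real.exp (t * |η i0 ω|) :=
      Real.exp_le_exp.2 (mul_le_mul_of_nonneg_left hMle ht.le)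
    have h2 : Real.exp (t * |η i0 ω|) ≤ Real.exp (t * η i0 ω) + Real.exp (-(t * η i0 ω)) := by
      rcases abs_cases (η i0 ω) with ⟨h, _⟩ | ⟨h, _⟩
      · rw [h]; exact le_add_of_nonneg_right (Real.exp_pos _).le
      · rw [h, mul_neg]; exact le_add_of_nonneg_left (Real.exp_pos _).le
    refine h1.trans (h2.trans ?_)
    exact Finset.single_le_sum (f := fun i => Real.exp (t * η i ω) + Real.exp (-(t * η i ω)))
      (fun i _ => by positivity) (Finset.mem_univ i0)
  have hMle : ∀ ω, M ω ≤ a + (Real.exp (-(t*a))/t) * g ω := by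
    intro ω
    have h1 := Real.add_one_le_exp (t * (M ω - a))
    have h2 : Real.exp (t * (M ω - a)) = Real.exp (-(t*a)) * Real.exp (t * M ω) := by
      rw [← Real.exp_add]; ring_nf
    have h4 : Real.exp (t * (M ω - a)) ≤ Real.exp (-(t*a)) * g ω := by
      rw [h2]; exact mul_le_mul_of_nonneg_left (hexpM ω) (Real.exp_pos _).le
    have h5 : t * (M ω - a) ≤ Real.exp (-(t*a)) * g ω := by linarith
    have h6 : M ω - a ≤ (Real.exp (-(t*a)) * g ω) / t := by
      rw [le_div_iff₀ ht]; linarith [h5]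
    have h7 : (Real.exp (-(t*a)) * g ω) / t = (Real.exp (-(t*a))/t) * g ω := by ring
    linarith [h6, h7.le]
  have hdom : Integrable (fun ω => a + (Real.exp (-(t*a))/t) * g ω) P :=
    (integrable_const a).add (hgint.const_mul _)
  have hMint : Integrable M P := by
    refine hdom.mono' hMmeas.aestronglyMeasurable (ae_of_all _ fun ω => ?_)
    rw [Real.norm_eq_abs, abs_of_nonneg (hMnn ω)]
    exact hMle ω
  refine ⟨hMint, ?_⟩
  have h6 : ∫ ω, M ω ∂P ≤ ∫ ω, (a + (Real.exp (-(t*a))/t) * g ω) ∂P :=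
    integral_mono hMint hdom hMle
  rw [integral_add (integrable_const a) (hgint.const_mul _), integral_const,
    integral_const_mul, hgval] at h6
  simp only [probReal_univ, measure_univ, ENNReal.toReal_one, smul_eq_mul, one_mul] at h6
  -- compute the constant
  have hta : t * a = ξ^2*t^2/2 + Real.log (2*N) := by
    rw [ha_def]; field_simp
  have h2N : (0:ℝ) < 2*N := by positivity
  have hexpa : Real.exp (-(t*a)) * (↑N * (2 * Real.exp (ξ^2*t^2/2))) = 1 := by
    rw [show Real.exp (-(t*a)) * (↑N * (2 * Real.exp (ξ^2*t^2/2)))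
        = (2*N) * (Real.exp (-(t*a)) * Real.exp (ξ^2*t^2/2)) from by ring,
      ← Real.exp_add, hta]
    rw [show -(ξ^2*t^2/2 + Real.log (2*N)) + ξ^2*t^2/2 = -Real.log (2*N) from by ring,
      Real.exp_neg, Real.exp_log h2N, mul_inv_cancel₀ h2N.ne']
  have hconst : Real.exp (-(t*a))/t * (↑N * (2 * Real.exp (ξ^2*t^2/2))) = 1/t := by
    rw [div_mul_eq_mul_div, hexpa]
  rw [hconst] at h6
  -- numeric bound : a + 1/t ≤ 4 ξ u
  have ha2 : a = 3*u*ξ/2 + Real.log (2*N) * ξ/(3*u) := by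
    rw [ha_def, ht_def]; field_simp
  have h1t : 1/t = ξ/(3*u) := by rw [ht_def]; field_simp
  have hkey : Real.log (2*N) + 1 ≤ (15/2) * L := by
    rw [Real.log_mul two_ne_zero (by positivity), hL]
    nlinarith
  have hsub : (0:ℝ) ≤ (15/2)*u^2 - (Real.log (2*N) + 1) := by rw [hu2]; linarith
  have heq : 4*ξ*u - (3*u*ξ/2 + Real.log (2*N)*ξ/(3*u) + ξ/(3*u))
      = ξ * ((15/2)*u^2 - (Real.log (2*N)+1)) / (3*u) := by
    field_simp; ring
  have hpos : (0:ℝ) ≤ ξ * ((15/2)*u^2 - (Real.log (2*N)+1)) / (3*u) :=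
    div_nonneg (mul_nonneg hξ.le hsub) (by positivity)
  calc ∫ ω, M ω ∂P ≤ a + 1/t := h6
    _ ≤ 4*ξ*u := by rw [ha2, h1t]; linarith [heq, hpos]


end AuxLemmas

/-- Under the CBO setup, for every component `s` and iteration `k`,
`E[diam(y_k^s)] ≤ θ^k E[diam(y_0^s)]`. -/
theorem stmt5 {N d : ℕ} {Ω : Type} [MeasurableSpace Ω] (P : Measure Ω)
    [IsProbabilityMeasure P] (C : CBOData N d Ω) (hC : C.Hyp P)
    (hint : ∀ s : Fin d, Integrable (fun ω => vdiam (C.y 0 s ω)) P)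
    (s : Fin d) (k : ℕ) :
    ∫ ω, vdiam (C.y k s ω) ∂P ≤ C.th ^ k * ∫ ω, vdiam (C.y 0 s ω) ∂P := by
  haveI hNE : Nonempty (Fin N) := Fin.pos_iff_nonempty.mp hC.hN
  have hγ0 := hC.hγ.1
  have hγ1 := hC.hγ.2
  have hξ := hC.hξ
  set M : ℕ → Ω → ℝ := fun k ω => ⨆ i, |C.η k s i ω| with hM_def
  set W : ℕ → Ω → ℝ := fun k ω => (1 - C.γ) + 2 * M k ω with hW_def
  have hmax : ∀ k, Integrable (M k) P ∧
      ∫ ω, M k ω ∂P ≤ 4 * C.ξ * Real.sqrt (Real.log (Real.sqrt 2 * N)) := fun k =>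
    aux_maxbound P hC.hN hC.hξ (fun i => C.η k s i) (fun i => hC.meas_η k s i)
      (fun i => hC.η_gauss k s i)
  have hWint : ∀ k, Integrable (W k) P := by
    intro k
    rw [hW_def]
    exact (integrable_const _).add ((hmax k).1.const_mul 2)
  have hWval : ∀ k, ∫ ω, W k ω ∂P ≤ C.th := by
    intro k
    simp only [hW_def]
    rw [integral_add (integrable_const _) ((hmax k).1.const_mul 2), integral_const,
      integral_const_mul]
    simp only [probReal_univ, measure_univ, ENNReal.toReal_one, smul_eq_mul, one_mul]
    have := (hmax k).2
    rw [CBOData.th]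
    linarith
  have hθ : 0 ≤ C.th := by
    rw [CBOData.th]
    have h8 : 0 ≤ 8 * C.ξ * Real.sqrt (Real.log (Real.sqrt 2 * N)) := by positivity
    linarith
  have hkey : ∀ k ω, vdiam (C.y (k+1) s ω) ≤ vdiam (C.y k s ω) * W k ω := by
    intro k ω
    have hxc : C.xhat k ω s
        = (∑ i, Real.exp (-C.α * C.fhat k i ω))⁻¹
          * ∑ i, Real.exp (-C.α * C.fhat k i ω) * C.y k s ω i := by
      simp only [CBOData.xhat]
      rw [aux_euclid_apply]
      rfl
    have hcons := aux_consensus (fun i => Real.exp (-C.α * C.fhat k i ω)) (C.y k s ω)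
      (fun i => Real.exp_pos _)
    have hmnn1 : ∀ i, |C.η k s i ω| ≤ M k ω := fun i =>
      le_ciSup (f := fun i => |C.η k s i ω|) ((Set.finite_range _).bddAbove) i
    have hmnn0 : 0 ≤ M k ω :=
      le_trans (abs_nonneg _) (hmnn1 (Classical.arbitrary _))
    have hres := aux_contract C.γ (C.xhat k ω s) (M k ω) (by linarith) hmnn0
      (C.y k s ω) (C.y (k+1) s ω) (fun i => C.η k s i ω)
      (by rw [hxc]; exact hcons.1) (by rw [hxc]; exact hcons.2) hmnn1
      (fun i => hC.evol k i s ω)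
    calc vdiam (C.y (k+1) s ω) ≤ vdiam (C.y k s ω) * ((1 - C.γ) + 2 * M k ω) := hres
      _ = vdiam (C.y k s ω) * W k ω := by rw [hW_def]
  have hDmeas : ∀ k, Measurable fun ω => vdiam (C.y k s ω) := by
    intro k
    have hcomp : ∀ i, Measurable fun ω => C.y k s ω i :=
      fun i => (measurable_pi_apply s).comp ((WithLp.measurable_ofLp 2 _).comp (hC.meas_x k i))
    exact (aux_meas_sup hcomp).sub (aux_meas_inf hcomp)
  have hindep : ∀ k, IndepFun (fun ω => vdiam (C.y k s ω)) (W k) P := by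
    intro k
    rw [IndepFun_iff_Indep]
    have hWm : Measurable[C.noiseσ k] (W k) := by
      have hηm : ∀ i, Measurable[C.noiseσ k] (C.η k s i) := by
        intro i
        refine measurable_iff_comap_le.2 ?_
        exact le_iSup_of_le s (le_iSup_of_le i le_rfl)
      have hMm : Measurable[C.noiseσ k] (M k) := by
        rw [hM_def]
        exact aux_meas_sup (m := C.noiseσ k) fun i => measurable_abs.comp (hηm i)
      rw [hW_def]
      exact measurable_const.add (hMm.const_mul 2)
    have hDm : Measurable[C.histσ k] fun ω => vdiam (C.y k s ω) := by
      have hxm : ∀ i, Measurable[C.histσ k] (C.x k i) := by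
        intro i
        refine measurable_iff_comap_le.2 ?_
        refine le_trans ?_ le_sup_left
        exact le_iSup_of_le k (le_iSup_of_le le_rfl (le_iSup_of_le i le_sup_left))
      have hcomp : ∀ i, Measurable[C.histσ k] fun ω => C.y k s ω i :=
        fun i => (measurable_pi_apply s).comp ((WithLp.measurable_ofLp 2 _).comp (hxm i))
      exact Measurable.sub (aux_meas_sup (m := C.histσ k) hcomp)
        (aux_meas_inf (m := C.histσ k) hcomp)
    exact indep_of_indep_of_le_right
      (indep_of_indep_of_le_left (hC.η_indep_hist k).symm
        (measurable_iff_comap_le.1 hDm))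
      (measurable_iff_comap_le.1 hWm)
  have hDnn : ∀ k ω, 0 ≤ vdiam (C.y k s ω) := by
    intro k ω
    have h1 := ciInf_le (f := C.y k s ω) ((Set.finite_range _).bddBelow)
      (Classical.arbitrary (Fin N))
    have h2 := le_ciSup (f := C.y k s ω) ((Set.finite_range _).bddAbove)
      (Classical.arbitrary (Fin N))
    rw [vdiam]; linarith
  have main : ∀ k, Integrable (fun ω => vdiam (C.y k s ω)) P ∧
      ∫ ω, vdiam (C.y k s ω) ∂P ≤ C.th ^ k * ∫ ω, vdiam (C.y 0 s ω) ∂P := by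
    intro k
    induction k with
    | zero => exact ⟨hint s, by simp⟩
    | succ k ih =>
      obtain ⟨hDk, hIk⟩ := ih
      have hprod : Integrable (fun ω => vdiam (C.y k s ω) * W k ω) P :=
        (hindep k).integrable_mul hDk (hWint k)
      have hD1 : Integrable (fun ω => vdiam (C.y (k+1) s ω)) P := by
        refine hprod.mono' (hDmeas (k+1)).aestronglyMeasurable (ae_of_all _ fun ω => ?_)
        rw [Real.norm_eq_abs, abs_of_nonneg (hDnn (k+1) ω)]
        exact hkey k ω
      have hmono : ∫ ω, vdiam (C.y (k+1) s ω) ∂P ≤ ∫ ω, vdiam (C.y k s ω) * W k ω ∂P :=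
        integral_mono hD1 hprod (hkey k)
      have hmul : ∫ ω, vdiam (C.y k s ω) * W k ω ∂P
          = (∫ ω, vdiam (C.y k s ω) ∂P) * ∫ ω, W k ω ∂P :=
        (hindep k).integral_mul_eq_mul_integral hDk.aestronglyMeasurable (hWint k).aestronglyMeasurable
      have hDknn : 0 ≤ ∫ ω, vdiam (C.y k s ω) ∂P := integral_nonneg fun ω => hDnn k ω
      refine ⟨hD1, ?_⟩
      calc ∫ ω, vdiam (C.y (k+1) s ω) ∂P
          ≤ (∫ ω, vdiam (C.y k s ω) ∂P) * ∫ ω, W k ω ∂P := by rw [← hmul]; exact hmono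
        _ ≤ (∫ ω, vdiam (C.y k s ω) ∂P) * C.th :=
            mul_le_mul_of_nonneg_left (hWval k) hDknn
        _ ≤ (C.th ^ k * ∫ ω, vdiam (C.y 0 s ω) ∂P) * C.th :=
            mul_le_mul_of_nonneg_right hIk hθ
        _ = C.th ^ (k+1) * ∫ ω, vdiam (C.y 0 s ω) ∂P := by ring
  exact (main k).2
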